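/- Let p be an odd prime, n ≥ 2, and G = A ⋊ ⟨x⟩ where A = Z_{p^n} × Z_{p^n}, ⟨x⟩ ≅ Z_{p^{n-1}}, and x acts on A by c ↦ c^{1+p}. Then the commutator subgroup G' equals A^p = ⟨a^p⟩ × ⟨b^p⟩ and G is nilpotent of class exactly n. -/

import Mathlib

/-- The subgroup of `q`-th powers of elements of an abelian subgroup `A`. -/
def Subgroup.powSubgroup {G : Type*} [Group G] (A : Subgroup G)
    (hcomm : ∀ a b : G, a ∈ A → b ∈ A → a * b = b * a) (q : ℕ) : Subgroup G where
  carrier := {g : G | ∃ c ∈ A, g = c ^ q}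
  one_mem' := ⟨1, A.one_mem, (one_pow q).symm⟩
  mul_mem' := by
    rintro _ _ ⟨c, hc, rfl⟩ ⟨d, hd, rfl⟩
    exact ⟨c * d, A.mul_mem hc hd, (Commute.mul_pow (hcomm c d hc hd) q).symm⟩
  inv_mem' := by
    rintro _ ⟨c, hc, rfl⟩
    exact ⟨c⁻¹, A.inv_mem hc, (inv_pow c q).symm⟩

open scoped commutatorElement

theorem commutator_and_class_of_construction (p n : ℕ) (hp : p.Prime) (hodd : Odd p)
    (hn : 2 ≤ n) (G : Type*) [Group G] [Finite G] (A : Subgroup G) (x : G)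
    (hAnorm : A.Normal)
    (hcompl : Subgroup.IsComplement' A (Subgroup.zpowers x))
    (hAiso : Nonempty (A ≃* Multiplicative (ZMod (p ^ n) × ZMod (p ^ n))))
    (hx : orderOf x = p ^ (n - 1))
    (hact : ∀ c ∈ A, x⁻¹ * c * x = c ^ (1 + p)) :
    (commutator G : Set G) = {g : G | ∃ c ∈ A, g = c ^ p} ∧
      Subgroup.lowerCentralSeries (⊤ : Subgroup G) n = ⊥ ∧
        Subgroup.lowerCentralSeries (⊤ : Subgroup G) (n - 1) ≠ ⊥ := by
  obtain ⟨e⟩ := hAiso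
  -- A is commutative
  have hcomm : ∀ a b : G, a ∈ A → b ∈ A → a * b = b * a := by
    intro a b ha hb
    have h2 : (⟨a, ha⟩ : A) * ⟨b, hb⟩ = ⟨b, hb⟩ * ⟨a, ha⟩ :=
      e.injective (by rw [map_mul, map_mul, mul_comm])
    exact congrArg Subtype.val h2
  set B : ℕ → Subgroup G := fun k => Subgroup.powSubgroup A hcomm (p ^ k) with hBdef
  have hBmem : ∀ k (g : G), g ∈ B k ↔ ∃ c ∈ A, g = c ^ p ^ k := fun _ _ => Iff.rfl
  -- exponent of A is p^n
  have hexp : ∀ c ∈ A, c ^ p ^ n = 1 := by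
    intro c hc
    have hz : (e ⟨c, hc⟩) ^ p ^ n = 1 := by
      have h0 : (p ^ n) • (e ⟨c, hc⟩).toAdd = 0 := by
        have h1 : ((p : ZMod (p ^ n))) ^ n = 0 := by exact_mod_cast ZMod.natCast_self (p ^ n)
        ext <;> simp [nsmul_eq_mul, h1]
      calc (e ⟨c, hc⟩) ^ p ^ n
          = Multiplicative.ofAdd ((p ^ n) • (e ⟨c, hc⟩).toAdd) := by
            rw [ofAdd_nsmul]; rfl
        _ = 1 := by rw [h0]; rfl
    have h2 : (⟨c, hc⟩ : A) ^ p ^ n = 1 := e.injective (by rw [map_pow, map_one, hz])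
    exact congrArg Subtype.val h2
  -- conjugation by x^m
  have hconj : ∀ (m : ℕ) (c : G), c ∈ A → (x ^ m)⁻¹ * c * x ^ m = c ^ (1 + p) ^ m := by
    intro m
    induction m with
    | zero => intro c hc; simp
    | succ m ih =>
        intro c hc
        have h1 : (x ^ (m + 1))⁻¹ * c * x ^ (m + 1)
            = x⁻¹ * ((x ^ m)⁻¹ * c * x ^ m) * x := by
          rw [pow_succ]; group
        rw [h1, ih c hc, hact _ (A.pow_mem hc _), ← pow_mul, pow_succ]
  have hxord : x ^ p ^ (n - 1) = 1 := by rw [← hx]; exact pow_orderOf_eq_one x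
  -- conjugation on the other side, with natural exponent
  have hconjL : ∀ (m : ℕ) (c : G), c ∈ A →
      x ^ m * c * (x ^ m)⁻¹ = c ^ (1 + p) ^ (m * (p ^ (n - 1) - 1)) := by
    intro m c hc
    have hpos : 1 ≤ p ^ (n - 1) := Nat.one_le_pow _ _ hp.pos
    have hinv : x ^ m = (x ^ (m * (p ^ (n - 1) - 1)))⁻¹ := by
      rw [eq_inv_iff_mul_eq_one, ← pow_add]
      have harith : m + m * (p ^ (n - 1) - 1) = m * p ^ (n - 1) := by
        obtain ⟨t, ht⟩ := Nat.exists_eq_add_of_le hpos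
        rw [ht, Nat.add_sub_cancel_left]; ring
      rw [harith, mul_comm, pow_mul, hxord, one_pow]
    rw [hinv, inv_inv]
    exact hconj _ c hc
  -- binomial: (1+p)^M = 1 + p * s
  have hbin : ∀ M : ℕ, ∃ s : ℕ, (1 + p) ^ M = 1 + p * s := by
    intro M
    induction M with
    | zero => exact ⟨0, by simp⟩
    | succ M ih =>
        obtain ⟨s, hs⟩ := ih
        exact ⟨s + 1 + p * s, by rw [pow_succ, hs]; ring⟩
  -- decomposition of elements of G
  have hdecomp : ∀ g : G, ∃ a ∈ A, ∃ m : ℕ, g = a * x ^ m := by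
    intro g
    obtain ⟨⟨⟨a, ha⟩, ⟨y, hy⟩⟩, hg, -⟩ := hcompl.existsUnique g
    obtain ⟨j, rfl⟩ := hy
    have hopos : (0 : ℤ) < (orderOf x : ℤ) := by
      rw [hx]; exact_mod_cast Nat.pow_pos hp.pos
    refine ⟨a, ha, (j % (orderOf x : ℤ)).toNat, ?_⟩
    rw [← hg]
    congr 1
    rw [← zpow_natCast, Int.toNat_of_nonneg (Int.emod_nonneg j (by omega)),
      zpow_mod_orderOf]
  -- key commutator formula with an element of A
  have hkey : ∀ (g : G) (c : G), c ∈ A → ∃ s : ℕ, ⁅g, c⁆ = (c ^ s) ^ p := by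
    intro g c hc
    obtain ⟨a, ha, m, rfl⟩ := hdecomp g
    set M := m * (p ^ (n - 1) - 1) with hM
    obtain ⟨s, hs⟩ := hbin M
    refine ⟨s, ?_⟩
    have hcE : c ^ (1 + p) ^ M ∈ A := A.pow_mem hc _
    have h1 : ⁅a * x ^ m, c⁆ = a * (x ^ m * c * (x ^ m)⁻¹) * a⁻¹ * c⁻¹ := by
      rw [commutatorElement_def]; group
    have h2 : a * c ^ (1 + p) ^ M * a⁻¹ * c⁻¹ = c ^ (1 + p) ^ M * c⁻¹ := by
      rw [hcomm a _ ha hcE]; group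
    rw [h1, hconjL m c hc, ← hM, h2, hs, add_comm 1 (p * s), pow_succ,
      mul_assoc, mul_inv_cancel, mul_one, mul_comm p s, pow_mul]
  -- the lower central series
  have hLCS : ∀ k : ℕ, Subgroup.lowerCentralSeries (⊤ : Subgroup G) (k + 1) = B (k + 1) := by
    intro k
    induction k with
    | zero =>
        have hrw : Subgroup.lowerCentralSeries (⊤ : Subgroup G) 1 = ⁅(⊤ : Subgroup G), ⊤⁆ := rfl
        rw [hrw]
        apply le_antisymm
        · rw [Subgroup.commutator_le]
          intro g _ h _
          obtain ⟨b, hb, l, rfl⟩ := hdecomp h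
          obtain ⟨a, ha, m, rfl⟩ := hdecomp g
          obtain ⟨s1, hEl⟩ := hbin (l * (p ^ (n - 1) - 1))
          obtain ⟨s2, hEm⟩ := hbin (m * (p ^ (n - 1) - 1))
          have hid : ⁅a * x ^ m, b * x ^ l⁆
              = a * (x ^ m * b * (x ^ m)⁻¹) * (x ^ l * a * (x ^ l)⁻¹)⁻¹ * b⁻¹ := by
            simp only [commutatorElement_def]
            group
          rw [hid, hconjL m b hb, hconjL l a ha, hEl, hEm]
          have hbE : b ^ (1 + p * s2) ∈ A := A.pow_mem hb _
          have hY : a * (a ^ (1 + p * s1))⁻¹ = ((a ^ s1) ^ p)⁻¹ := by group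
          have hswapinv : ((a ^ s1) ^ p)⁻¹ * b⁻¹ = b⁻¹ * ((a ^ s1) ^ p)⁻¹ :=
            hcomm _ _ (A.inv_mem (A.pow_mem (A.pow_mem ha _) _)) (A.inv_mem hb)
          have hfinal : b ^ (1 + p * s2) * a * (a ^ (1 + p * s1))⁻¹ * b⁻¹
              = (b ^ (1 + p * s2) * b⁻¹) * ((a ^ s1) ^ p)⁻¹ := by
            calc b ^ (1 + p * s2) * a * (a ^ (1 + p * s1))⁻¹ * b⁻¹
                = b ^ (1 + p * s2) * (a * (a ^ (1 + p * s1))⁻¹ * b⁻¹) := by group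
              _ = b ^ (1 + p * s2) * (((a ^ s1) ^ p)⁻¹ * b⁻¹) := by rw [hY]
              _ = b ^ (1 + p * s2) * (b⁻¹ * ((a ^ s1) ^ p)⁻¹) := by rw [hswapinv]
              _ = (b ^ (1 + p * s2) * b⁻¹) * ((a ^ s1) ^ p)⁻¹ := by rw [mul_assoc]
          rw [hcomm a _ ha hbE, hfinal]
          have hb2 : b ^ (1 + p * s2) * b⁻¹ = (b ^ s2) ^ p := by group
          rw [hb2]
          exact (B 1).mul_mem ⟨b ^ s2, A.pow_mem hb _, by rw [pow_one]⟩
            ((B 1).inv_mem ⟨a ^ s1, A.pow_mem ha _, by rw [pow_one]⟩)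
        · rintro _ ⟨d, hd, rfl⟩
          have e1 : ⁅d⁻¹, x⁻¹⁆ = d⁻¹ * (x⁻¹ * d * x) := by
            rw [commutatorElement_def]; group
          have h1 : ⁅d⁻¹, x⁻¹⁆ = d ^ p ^ 1 := by
            rw [e1, hact d hd, pow_add, pow_one, ← mul_assoc, inv_mul_cancel, one_mul,
              pow_one]
          rw [← h1]
          exact Subgroup.commutator_mem_commutator (Subgroup.mem_top _) (Subgroup.mem_top _)
    | succ k ih =>
        have hrw : Subgroup.lowerCentralSeries (⊤ : Subgroup G) (k + 2) = ⁅Subgroup.lowerCentralSeries (⊤ : Subgroup G) (k + 1), ⊤⁆ := rfl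
        rw [hrw, ih]
        apply le_antisymm
        · rw [Subgroup.commutator_le]
          rintro _ ⟨d, hd, rfl⟩ g -
          obtain ⟨s, hs⟩ := hkey g (d ^ p ^ (k + 1)) (A.pow_mem hd _)
          have h1' : ⁅d ^ p ^ (k + 1), g⁆ = (⁅g, d ^ p ^ (k + 1)⁆)⁻¹ := by
            rw [← commutatorElement_inv]
          rw [h1', hs]
          apply (B (k + 2)).inv_mem
          refine ⟨d ^ s, A.pow_mem hd _, ?_⟩
          rw [← pow_mul, ← pow_mul, ← pow_mul]
          congr 1
          rw [pow_succ]
          ring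
        · rintro _ ⟨d, hd, rfl⟩
          set c : G := d ^ p ^ (k + 1) with hcdef
          have hcA : c ∈ A := A.pow_mem hd _
          have e1 : ⁅c⁻¹, x⁻¹⁆ = c⁻¹ * (x⁻¹ * c * x) := by
            rw [commutatorElement_def]; group
          have h1 : ⁅c⁻¹, x⁻¹⁆ = d ^ p ^ (k + 2) := by
            rw [e1, hact c hcA, pow_add, pow_one, ← mul_assoc, inv_mul_cancel, one_mul,
              hcdef, ← pow_mul, ← pow_succ]
          rw [← h1]
          exact Subgroup.commutator_mem_commutator
            ((B (k + 1)).inv_mem ⟨d, hd, rfl⟩) (Subgroup.mem_top _)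
  refine ⟨?_, ?_, ?_⟩
  · have h1 : commutator G = B 1 := by rw [← Subgroup.top_lowerCentralSeries_one]; exact hLCS 0
    rw [h1]
    ext g
    simp only [SetLike.mem_coe, hBmem, pow_one, Set.mem_setOf_eq]
  · have h1 : n - 1 + 1 = n := by omega
    have h2 := hLCS (n - 1)
    rw [h1] at h2
    rw [h2, eq_bot_iff]
    rintro _ ⟨d, hd, rfl⟩
    simp [Subgroup.mem_bot, h1, hexp d hd]
  · have h1 : n - 2 + 1 = n - 1 := by omega
    have h2 := hLCS (n - 2)
    rw [h1] at h2
    rw [h2]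
    intro hbot
    set z : A := e.symm (Multiplicative.ofAdd ((1 : ZMod (p ^ n)), (0 : ZMod (p ^ n))))
      with hzdef
    have hmem : ((z : G)) ^ p ^ (n - 1) ∈ B (n - 1) := ⟨z, z.2, rfl⟩
    rw [hbot, Subgroup.mem_bot] at hmem
    have hco : ((z : G)) ^ p ^ (n - 1) = ((z ^ p ^ (n - 1) : A) : G) := by push_cast; rfl
    rw [hco] at hmem
    have hz1 : (z : A) ^ p ^ (n - 1) = 1 := by
      exact Subtype.ext hmem
    have h3 := congrArg e hz1
    rw [map_pow, map_one, hzdef, MulEquiv.apply_symm_apply, ← ofAdd_nsmul] at h3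
    have h4 : ((p ^ (n - 1) : ℕ) : ZMod (p ^ n)) = 0 := by
      have h5 := congrArg Multiplicative.toAdd h3
      simp only [toAdd_ofAdd, toAdd_one, Prod.smul_mk, smul_zero, Prod.mk_eq_zero,
        nsmul_eq_mul, mul_one] at h5
      exact h5.1
    rw [ZMod.natCast_eq_zero_iff] at h4
    have h6 := Nat.le_of_dvd (pow_pos hp.pos _) h4
    have h7 : p ^ (n - 1) < p ^ n := Nat.pow_lt_pow_right hp.one_lt (by omega)
    omega
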